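/- Let a, b, c, d be complex numbers with a ≠ c, b ≠ d, and b - a = c - d (so that a - b + c - d = 0). Suppose f: {a,b,c,d} → ℂ satisfies the discrete Cauchy–Riemann equation (f(a)-f(c))/(a-c) = (f(b)-f(d))/(b-d). Then (f(c)(b-c) + f(b)(a-c) + f(a)(a-b))/(2(a-c)) - (f(d)(c-d) + f(c)(b-d) + f(b)(b-c))/(2(b-d)) = 0. (This expresses that the discrete primitive F(z) = ∫ f δz of a discrete analytic function again satisfies the discrete Cauchy–Riemann equation on each face.) -/

import Mathlib

theorem primitive_satisfies_CR
    (a b c d : ℂ) (f : ℂ → ℂ)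
    (hac : a ≠ c) (hbd : b ≠ d) (hpar : b - a = c - d)
    (hCR : (f a - f c) / (a - c) = (f b - f d) / (b - d)) :
    (f c * (b - c) + f b * (a - c) + f a * (a - b)) / (2 * (a - c)) -
      (f d * (c - d) + f c * (b - d) + f b * (b - c)) / (2 * (b - d)) = 0 := by
  have h1 : a - c ≠ 0 := sub_ne_zero.mpr hac
  have h2 : b - d ≠ 0 := sub_ne_zero.mpr hbd
  rw [div_eq_div_iff h1 h2] at hCR
  have hd : d = c - b + a := by linear_combination hpar
  subst hd
  field_simp
  linear_combination (a - b) * hCR
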